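/- Let P be a set of n points in ℝ², let 2 ≤ K ≤ n, and suppose a family C of circles each containing between k and 2k points of P has |C| = O(n/k) where k ≥ c n^{1/2}. Then the total number of weighted incidences between points of P and perpendicular bisectors determined by pairs of points lying on a common circle of C (each bisector weighted by the number of such pairs determining it) is O(n²). -/

import Mathlib

open scoped Classical

noncomputable section

abbrev Plane := EuclideanSpace ℝ (Fin 2)

lemma unique_third (o p q r r' : Plane) (R : ℝ) (hpo : p ≠ o)
    (hq : dist q o = R) (hr : dist r o = R) (hr' : dist r' o = R)
    (hrq : r ≠ q) (hr'q : r' ≠ q)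
    (hdr : dist p r = dist p q) (hdr' : dist p r' = dist p q) : r = r' := by
  by_contra hne
  have hcos : EuclideanGeometry.Cospherical ({q, r, r'} : Set Plane) := by
    refine ⟨o, R, ?_⟩
    rintro x (rfl | rfl | rfl) <;> assumption
  have hind : AffineIndependent ℝ ![q, r, r'] :=
    hcos.affineIndependent_of_ne hrq.symm hr'q.symm hne
  let T : Affine.Simplex ℝ Plane 2 := ⟨![q, r, r'], hind⟩
  have hspan : affineSpan ℝ (Set.range T.points) = ⊤ := by
    rw [hind.affineSpan_eq_top_iff_card_eq_finrank_add_one]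
    simp [finrank_euclideanSpace_fin]
  have hp : p = T.circumcenter := by
    refine T.eq_circumcenter_of_dist_eq (r := dist p q) (hspan ▸ AffineSubspace.mem_top ℝ _ p) ?_
    intro i
    fin_cases i <;> simp [T, dist_comm, hdr, hdr']
  have ho : o = T.circumcenter := by
    refine T.eq_circumcenter_of_dist_eq (r := R) (hspan ▸ AffineSubspace.mem_top ℝ _ o) ?_
    intro i
    fin_cases i <;> simp [T, hq, hr, hr']
  exact hpo (hp.trans ho.symm)

/-- Per-circle count: the number of triples `(p,q,r)` with `p ∈ P`, `q,r` distinct points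
of `P` on the sphere, and `p` equidistant from `q,r`, is at most `n*m + m*m`. -/
lemma per_circle (P : Finset Plane) (o : Plane) (R : ℝ) :
    ((P ×ˢ (P.filter (· ∈ Metric.sphere o R)) ×ˢ (P.filter (· ∈ Metric.sphere o R))).filter
      (fun t => t.2.1 ≠ t.2.2 ∧ dist t.1 t.2.1 = dist t.1 t.2.2)).card ≤
    P.card * (P.filter (· ∈ Metric.sphere o R)).card +
      (P.filter (· ∈ Metric.sphere o R)).card * (P.filter (· ∈ Metric.sphere o R)).card := by
  set Q := P.filter (· ∈ Metric.sphere o R) with hQ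
  set m := Q.card with hm
  set H : Plane → Finset (Plane × Plane) := fun p =>
    (Q ×ˢ Q).filter (fun qr => qr.1 ≠ qr.2 ∧ dist p qr.1 = dist p qr.2) with hH
  have hsub : (P ×ˢ Q ×ˢ Q).filter
      (fun t => t.2.1 ≠ t.2.2 ∧ dist t.1 t.2.1 = dist t.1 t.2.2) ⊆
      P.biUnion (fun p => ({p} : Finset Plane) ×ˢ H p) := by
    intro t ht
    simp only [Finset.mem_filter, Finset.mem_product] at ht
    obtain ⟨⟨h1, h2, h3⟩, hne, hd⟩ := ht
    refine Finset.mem_biUnion.2 ⟨t.1, h1, ?_⟩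
    refine Finset.mem_product.2 ⟨Finset.mem_singleton_self _, ?_⟩
    simp only [hH, Finset.mem_filter, Finset.mem_product]
    exact ⟨⟨h2, h3⟩, hne, hd⟩
  refine le_trans (Finset.card_le_card hsub) ?_
  refine le_trans Finset.card_biUnion_le ?_
  have hcard : ∀ p : Plane, (({p} : Finset Plane) ×ˢ H p).card = (H p).card := by
    intro p; rw [Finset.card_product, Finset.card_singleton, one_mul]
  have hHbound : ∀ p : Plane, (H p).card ≤ m + (if p = o then m * m else 0) := by
    intro p
    by_cases hpo : p = o
    · subst hpo
      simp only [if_pos rfl]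
      calc (H p).card ≤ (Q ×ˢ Q).card := Finset.card_filter_le _ _
        _ = m * m := by rw [Finset.card_product]
        _ ≤ m + m * m := Nat.le_add_left _ _
    · simp only [if_neg hpo, add_zero]
      refine Finset.card_le_card_of_injOn Prod.fst ?_ ?_
      · intro qr hqr
        simp only [hH, Finset.mem_coe, Finset.mem_filter, Finset.mem_product] at hqr
        exact hqr.1.1
      · intro a ha b hb hab
        rw [Finset.mem_coe] at ha hb
        simp only [hH, Finset.mem_filter, Finset.mem_product] at ha hb
        obtain ⟨⟨ha1, ha2⟩, hane, had⟩ := ha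
        obtain ⟨⟨hb1, hb2⟩, hbne, hbd⟩ := hb
        have hda : dist a.2 o = R := by
          have := (Finset.mem_filter.1 ha2).2; exact Metric.mem_sphere.1 this
        have hdb : dist b.2 o = R := by
          have := (Finset.mem_filter.1 hb2).2; exact Metric.mem_sphere.1 this
        have hdq : dist a.1 o = R := by
          have := (Finset.mem_filter.1 ha1).2; exact Metric.mem_sphere.1 this
        have h22 : a.2 = b.2 := by
          refine unique_third o p a.1 a.2 b.2 R hpo hdq hda hdb hane.symm ?_ had.symm ?_
          · rw [← hab] at hbne; exact hbne.symm
          · rw [← hab] at hbd; exact hbd.symm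
        exact Prod.ext hab h22
  calc ∑ p ∈ P, (({p} : Finset Plane) ×ˢ H p).card
      = ∑ p ∈ P, (H p).card := by simp_rw [hcard]
    _ ≤ ∑ p ∈ P, (m + (if p = o then m * m else 0)) := Finset.sum_le_sum (fun p _ => hHbound p)
    _ = P.card * m + ∑ p ∈ P, (if p = o then m * m else 0) := by
        rw [Finset.sum_add_distrib, Finset.sum_const, smul_eq_mul]
    _ ≤ P.card * m + m * m := by
        gcongr
        rw [Finset.sum_ite_eq' P o (fun _ => m * m)]
        split <;> simp

theorem rich_circle_incidences (c A : ℝ) (hc : 0 < c) (hA : 0 < A) :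
    ∃ C' > (0:ℝ), ∀ (P : Finset Plane) (𝒞 : Finset (Set Plane)) (k K : ℝ),
      2 ≤ K → K ≤ (P.card : ℝ) →
      c * (P.card : ℝ) ^ ((1:ℝ)/2) ≤ k →
      (∀ S ∈ 𝒞, (∃ o r, 0 < r ∧ S = Metric.sphere o r) ∧
        k ≤ ((P.filter (· ∈ S)).card : ℝ) ∧ ((P.filter (· ∈ S)).card : ℝ) ≤ 2 * k) →
      (𝒞.card : ℝ) ≤ A * (P.card : ℝ) / k →
      (Set.ncard {t : Plane × Plane × Plane |
          t.1 ∈ P ∧ t.2.1 ∈ P ∧ t.2.2 ∈ P ∧ t.2.1 ≠ t.2.2 ∧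
          (∃ S ∈ 𝒞, t.2.1 ∈ S ∧ t.2.2 ∈ S) ∧
          dist t.1 t.2.1 = dist t.1 t.2.2} : ℝ) ≤ C' * (P.card : ℝ) ^ 2 := by
  refine ⟨6 * A + 1, by positivity, ?_⟩
  intro P 𝒞 k K hK2 hKn hk h𝒞mem h𝒞card
  set n := P.card with hn
  set F := (P ×ˢ P ×ˢ P).filter (fun t => t.2.1 ≠ t.2.2 ∧
      (∃ S ∈ 𝒞, t.2.1 ∈ S ∧ t.2.2 ∈ S) ∧ dist t.1 t.2.1 = dist t.1 t.2.2) with hF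
  have hset : {t : Plane × Plane × Plane |
      t.1 ∈ P ∧ t.2.1 ∈ P ∧ t.2.2 ∈ P ∧ t.2.1 ≠ t.2.2 ∧
      (∃ S ∈ 𝒞, t.2.1 ∈ S ∧ t.2.2 ∈ S) ∧
      dist t.1 t.2.1 = dist t.1 t.2.2} = ↑F := by
    ext t
    simp only [hF, Set.mem_setOf_eq, Finset.coe_filter, Finset.mem_product]
    tauto
  rw [hset, Set.ncard_coe_finset]
  have hn0R : (0:ℝ) ≤ (n:ℝ) := Nat.cast_nonneg n
  rcases 𝒞.eq_empty_or_nonempty with h𝒞 | ⟨S₀, hS₀⟩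
  · have : F = ∅ := by
      subst h𝒞
      simp [hF, Finset.filter_eq_empty_iff]
    rw [this]
    simp only [Finset.card_empty, Nat.cast_zero]
    positivity
  · -- k ≤ n and k > 0 (unless n = 0, in which case F = ∅)
    have hmn : ∀ S : Set Plane, ((P.filter (· ∈ S)).card : ℝ) ≤ (n:ℝ) := by
      intro S
      exact_mod_cast Finset.card_le_card (Finset.filter_subset _ _)
    have hkn : k ≤ (n:ℝ) := le_trans (h𝒞mem S₀ hS₀).2.1 (hmn S₀)
    rcases Nat.eq_zero_or_pos n with hn0 | hnpos
    · have hP : P = ∅ := Finset.card_eq_zero.1 hn0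
      have : F = ∅ := by
        rw [hF, hP]
        simp
      rw [this]
      simp only [Finset.card_empty, Nat.cast_zero]
      positivity
    · have hnR : (0:ℝ) < (n:ℝ) := by exact_mod_cast hnpos
      have hk0 : 0 < k := lt_of_lt_of_le (by positivity) hk
      set G : Set Plane → Finset (Plane × Plane × Plane) := fun S =>
        (P ×ˢ (P.filter (· ∈ S)) ×ˢ (P.filter (· ∈ S))).filter
          (fun t => t.2.1 ≠ t.2.2 ∧ dist t.1 t.2.1 = dist t.1 t.2.2) with hG
      have hsub : F ⊆ 𝒞.biUnion G := by
        intro t ht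
        simp only [hF, Finset.mem_filter, Finset.mem_product] at ht
        obtain ⟨⟨h1, h2, h3⟩, hne, ⟨S, hS, hq, hr⟩, hd⟩ := ht
        refine Finset.mem_biUnion.2 ⟨S, hS, ?_⟩
        simp only [hG, Finset.mem_filter, Finset.mem_product]
        exact ⟨⟨h1, ⟨h2, hq⟩, ⟨h3, hr⟩⟩, hne, hd⟩
      have hGbound : ∀ S ∈ 𝒞, ((G S).card : ℝ) ≤ (n:ℝ) * (2*k) + (2*k) * (2*k) := by
        intro S hS
        obtain ⟨⟨o, R, hR, rfl⟩, hkm, hm2k⟩ := h𝒞mem S hS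
        have hnat := per_circle P o R
        have : ((G (Metric.sphere o R)).card : ℝ) ≤
            (n:ℝ) * ((P.filter (· ∈ Metric.sphere o R)).card : ℝ) +
            ((P.filter (· ∈ Metric.sphere o R)).card : ℝ) *
            ((P.filter (· ∈ Metric.sphere o R)).card : ℝ) := by
          exact_mod_cast hnat
        refine le_trans this ?_
        have hm0 : (0:ℝ) ≤ ((P.filter (· ∈ Metric.sphere o R)).card : ℝ) := Nat.cast_nonneg _
        gcongr
      have hstep1 : (F.card : ℝ) ≤ (𝒞.card : ℝ) * ((n:ℝ) * (2*k) + (2*k) * (2*k)) := by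
        have h1 : F.card ≤ ∑ S ∈ 𝒞, (G S).card :=
          le_trans (Finset.card_le_card hsub) Finset.card_biUnion_le
        have h2 : (F.card : ℝ) ≤ ∑ S ∈ 𝒞, ((G S).card : ℝ) := by exact_mod_cast h1
        refine le_trans h2 ?_
        refine le_trans (Finset.sum_le_sum hGbound) ?_
        rw [Finset.sum_const, nsmul_eq_mul]
      have hB0 : (0:ℝ) ≤ (n:ℝ) * (2*k) + (2*k) * (2*k) := by positivity
      have hstep2 : (𝒞.card : ℝ) * ((n:ℝ) * (2*k) + (2*k) * (2*k)) ≤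
          (A * (n:ℝ) / k) * ((n:ℝ) * (2*k) + (2*k) * (2*k)) :=
        mul_le_mul_of_nonneg_right h𝒞card hB0
      have heq : (A * (n:ℝ) / k) * ((n:ℝ) * (2*k) + (2*k) * (2*k)) =
          2 * A * (n:ℝ) * (n:ℝ) + 4 * A * (n:ℝ) * k := by
        field_simp
        ring
      have hfinal : 2 * A * (n:ℝ) * (n:ℝ) + 4 * A * (n:ℝ) * k ≤ (6 * A + 1) * (n:ℝ)^2 := by
        nlinarith [mul_nonneg (mul_nonneg hA.le hn0R) (sub_nonneg.2 hkn), sq_nonneg (n:ℝ)]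
      calc (F.card : ℝ) ≤ (𝒞.card : ℝ) * ((n:ℝ) * (2*k) + (2*k) * (2*k)) := hstep1
        _ ≤ (A * (n:ℝ) / k) * ((n:ℝ) * (2*k) + (2*k) * (2*k)) := hstep2
        _ = 2 * A * (n:ℝ) * (n:ℝ) + 4 * A * (n:ℝ) * k := heq
        _ ≤ (6 * A + 1) * (n:ℝ)^2 := hfinal
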